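/- Let d ≥ 2, let R = [a₁,b₁] × … × [a_d,b_d] be a (d−1)-dimensional hyperrectangle in ℝ^d, let δ > 0, and let r be any value satisfying r ≥ max_i (b_i − a_i) and r ≥ 8√d · δ. Then there exists a nice δ-net S of R with |S| ≤ (√d · r/(2δ))^{d−1}. -/

import Mathlib

/-- A face of the hyperrectangle `R = ∏ i [a i, b i]` is obtained by fixing
some coordinates to their endpoint values `a i` or `b i` and leaving the others
free. -/
def IsFace {d : ℕ} (a b : Fin d → ℝ) (F : Set (EuclideanSpace ℝ (Fin d))) : Prop :=
  ∃ σ : Fin d → Option Bool,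
    F = {y | ∀ i, (σ i).elim (a i ≤ y i ∧ y i ≤ b i)
      (fun s => y i = if s then b i else a i)}

/-- `S` is a nice `δ`-net of the hyperrectangle `R = ∏ i [a i, b i]`. -/
def IsNiceNet {d : ℕ} (δ : ℝ) (a b : Fin d → ℝ)
    (S : Finset (EuclideanSpace ℝ (Fin d))) : Prop :=
  (∀ z ∈ S, ∀ i, a i ≤ z i ∧ z i ≤ b i) ∧
  ∀ F : Set (EuclideanSpace ℝ (Fin d)), IsFace a b F →
    ∀ y ∈ F, ∃ z ∈ S, z ∈ F ∧ ‖z - y‖ ≤ δ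

/-- Number of grid intervals used in a coordinate of length `L`. -/
noncomputable def gridM (d : ℕ) (δ L : ℝ) : ℕ :=
  max 1 ⌈L * Real.sqrt ((d : ℝ) - 1) / (2 * δ)⌉₊

/-- The 1-dimensional grid in a coordinate interval `[aa, bb]`. -/
noncomputable def gridT (d : ℕ) (δ aa bb : ℝ) : Finset ℝ :=
  (Finset.range (gridM d δ (bb - aa) + 1)).image
    (fun k : ℕ => aa + (k : ℝ) * ((bb - aa) / (gridM d δ (bb - aa) : ℝ)))

lemma gridM_pos (d : ℕ) (δ L : ℝ) : 0 < gridM d δ L :=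
  lt_of_lt_of_le one_pos (le_max_left _ _)

lemma le_gridM (d : ℕ) (δ L : ℝ) :
    L * Real.sqrt ((d : ℝ) - 1) / (2 * δ) ≤ gridM d δ L :=
  (Nat.le_ceil _).trans (Nat.cast_le.2 (le_max_right 1 _))

lemma mem_gridT_left (d : ℕ) (δ aa bb : ℝ) : aa ∈ gridT d δ aa bb := by
  refine Finset.mem_image.2 ⟨0, ?_, by simp⟩
  simp

lemma mem_gridT_right (d : ℕ) (δ aa bb : ℝ) : bb ∈ gridT d δ aa bb := by
  refine Finset.mem_image.2 ⟨gridM d δ (bb - aa), Finset.mem_range.2 (Nat.lt_succ_self _), ?_⟩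
  have hm : ((gridM d δ (bb - aa) : ℕ) : ℝ) ≠ 0 := by
    exact_mod_cast (gridM_pos d δ (bb - aa)).ne'
  field_simp
  ring

lemma gridT_mem_Icc (d : ℕ) (δ aa bb : ℝ) (hab : aa ≤ bb) {z : ℝ}
    (hz : z ∈ gridT d δ aa bb) : aa ≤ z ∧ z ≤ bb := by
  obtain ⟨k, hk, rfl⟩ := Finset.mem_image.1 hz
  have hk' : (k : ℝ) ≤ (gridM d δ (bb - aa) : ℕ) := by
    exact Nat.cast_le.2 (Nat.lt_succ_iff.1 (Finset.mem_range.1 hk))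
  have hm : (0 : ℝ) < (gridM d δ (bb - aa) : ℕ) := by
    exact_mod_cast gridM_pos d δ (bb - aa)
  have hL : (0 : ℝ) ≤ bb - aa := by linarith
  constructor
  · have : 0 ≤ (k : ℝ) * ((bb - aa) / (gridM d δ (bb - aa) : ℕ)) :=
      mul_nonneg (Nat.cast_nonneg k) (div_nonneg hL hm.le)
    linarith
  · have h1 : (k : ℝ) * ((bb - aa) / (gridM d δ (bb - aa) : ℕ)) ≤
        ((gridM d δ (bb - aa) : ℕ) : ℝ) * ((bb - aa) / (gridM d δ (bb - aa) : ℕ)) := by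
      apply mul_le_mul_of_nonneg_right hk'
      positivity
    have h2 : ((gridM d δ (bb - aa) : ℕ) : ℝ) * ((bb - aa) / (gridM d δ (bb - aa) : ℕ))
        = bb - aa := by field_simp
    linarith

lemma card_gridT_le (d : ℕ) (δ aa bb : ℝ) :
    (gridT d δ aa bb).card ≤ gridM d δ (bb - aa) + 1 :=
  le_trans Finset.card_image_le (le_of_eq (Finset.card_range _))

lemma gridT_degenerate (d : ℕ) (δ aa bb : ℝ) (h : aa = bb) :
    gridT d δ aa bb = {aa} := by
  subst h
  unfold gridT
  rw [show (fun k : ℕ => aa + (k : ℝ) * ((aa - aa) / (gridM d δ (aa - aa) : ℝ)))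
      = fun _ => aa by funext k; simp]
  exact Finset.image_const ⟨0, Finset.mem_range.2 (Nat.succ_pos _)⟩ aa

lemma aux_div (L m δ e : ℝ) (hm : 0 < m) (he : 1 ≤ e)
    (h2 : L ^ 2 * e ≤ 4 * δ ^ 2 * m ^ 2) :
    (L / m) ^ 2 * (1 / 2) ^ 2 ≤ δ ^ 2 / e := by
  rw [div_pow, div_mul_eq_mul_div, div_le_div_iff₀ (by positivity) (by linarith)]
  nlinarith [h2]

lemma gridT_near (d : ℕ) (hd : 2 ≤ d) (δ : ℝ) (hδ : 0 < δ) (aa bb : ℝ) (hab : aa ≤ bb)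
    (y : ℝ) (hy1 : aa ≤ y) (hy2 : y ≤ bb) :
    ∃ z ∈ gridT d δ aa bb,
      (z - y) ^ 2 ≤ if aa < bb then δ ^ 2 / ((d : ℝ) - 1) else 0 := by
  rcases eq_or_lt_of_le hab with heq | hlt
  · refine ⟨aa, mem_gridT_left d δ aa bb, ?_⟩
    have hya : y = aa := le_antisymm (heq ▸ hy2) hy1
    simp [hya, heq.not_lt]
  · have hd1 : (1 : ℝ) ≤ (d : ℝ) - 1 := by
      have : (2 : ℝ) ≤ (d : ℝ) := by exact_mod_cast hd
      linarith
    set L := bb - aa with hLdef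
    have hL : 0 < L := by simp only [hLdef]; linarith
    have hm : (0 : ℝ) < (gridM d δ L : ℕ) := by exact_mod_cast gridM_pos d δ L
    set m : ℝ := ((gridM d δ L : ℕ) : ℝ) with hmdef
    set t := (y - aa) / L with htdef
    have ht0 : 0 ≤ t := div_nonneg (by linarith) hL.le
    have ht1 : t ≤ 1 := by rw [div_le_one hL]; linarith
    set k : ℕ := ⌊t * m + 1 / 2⌋₊ with hkdef
    have hx0 : 0 ≤ t * m + 1 / 2 := by positivity
    have hk_le : (k : ℝ) ≤ t * m + 1 / 2 := Nat.floor_le hx0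
    have hk_ge : t * m + 1 / 2 < (k : ℝ) + 1 := Nat.lt_floor_add_one _
    have hkm : k < gridM d δ L + 1 := by
      rw [Nat.floor_lt hx0]
      push_cast
      nlinarith
    refine ⟨aa + (k : ℝ) * (L / m), Finset.mem_image.2 ⟨k, Finset.mem_range.2 hkm, rfl⟩, ?_⟩
    rw [if_pos hlt]
    have hyt : y - aa = t * L := by
      rw [htdef]; field_simp
    have hzy : aa + (k : ℝ) * (L / m) - y = (L / m) * ((k : ℝ) - t * m) := by
      have : aa + (k : ℝ) * (L / m) - y = (k : ℝ) * (L / m) - (y - aa) := by ring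
      rw [this, hyt]
      field_simp
    have he : ((k : ℝ) - t * m) ^ 2 ≤ (1 / 2) ^ 2 :=
      sq_le_sq' (by linarith) (by linarith)
    have hsq : Real.sqrt ((d : ℝ) - 1) ^ 2 = (d : ℝ) - 1 := Real.sq_sqrt (by linarith)
    have h1 : L * Real.sqrt ((d : ℝ) - 1) ≤ 2 * δ * m := by
      have := le_gridM d δ L
      rw [div_le_iff₀ (by positivity)] at this
      linarith [this]
    have h2 : L ^ 2 * ((d : ℝ) - 1) ≤ 4 * δ ^ 2 * m ^ 2 := by
      nlinarith [mul_self_le_mul_self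
        (mul_nonneg hL.le (Real.sqrt_nonneg ((d : ℝ) - 1))) h1]
    have h3 : (L / m) ^ 2 * (1 / 2) ^ 2 ≤ δ ^ 2 / ((d : ℝ) - 1) :=
      aux_div L m δ ((d : ℝ) - 1) hm hd1 h2
    calc (aa + (k : ℝ) * (L / m) - y) ^ 2 = (L / m) ^ 2 * ((k : ℝ) - t * m) ^ 2 := by
          rw [hzy]; ring
      _ ≤ (L / m) ^ 2 * (1 / 2) ^ 2 := by
          apply mul_le_mul_of_nonneg_left he (by positivity)
      _ ≤ δ ^ 2 / ((d : ℝ) - 1) := h3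

lemma gridM_card_bound (d : ℕ) (hd : 2 ≤ d) (δ r L : ℝ) (hδ : 0 < δ) (hL0 : 0 ≤ L)
    (hLr : L ≤ r) (hr2 : 8 * Real.sqrt d * δ ≤ r) :
    ((gridM d δ L + 1 : ℕ) : ℝ) ≤ Real.sqrt d * r / (2 * δ) := by
  have hd2 : (2 : ℝ) ≤ (d : ℝ) := by exact_mod_cast hd
  set s := Real.sqrt (d : ℝ) with hsdef
  set tq := Real.sqrt ((d : ℝ) - 1) with htqdef
  have hs2 : s ^ 2 = (d : ℝ) := Real.sq_sqrt (by linarith)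
  have ht2 : tq ^ 2 = (d : ℝ) - 1 := Real.sq_sqrt (by linarith)
  have hts : tq ≤ s := Real.sqrt_le_sqrt (by linarith)
  have ht0 : 0 ≤ tq := Real.sqrt_nonneg _
  have hs0 : 0 < s := Real.sqrt_pos.2 (by linarith)
  have hx0 : 0 ≤ L * tq / (2 * δ) := by positivity
  have hceil : ((⌈L * tq / (2 * δ)⌉₊ : ℕ) : ℝ) < L * tq / (2 * δ) + 1 :=
    Nat.ceil_lt_add_one hx0
  have hM : ((gridM d δ L : ℕ) : ℝ) ≤ L * tq / (2 * δ) + 1 := by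
    have hcast : ((gridM d δ L : ℕ) : ℝ)
        = max 1 ((⌈L * tq / (2 * δ)⌉₊ : ℕ) : ℝ) := by
      unfold gridM
      push_cast [Nat.cast_max]
      rfl
    rw [hcast]
    apply max_le (by linarith) (by linarith)
  have hkey : r * tq + 4 * δ ≤ s * r := by
    nlinarith [mul_le_mul_of_nonneg_right hr2 (sub_nonneg.2 hts),
      mul_nonneg hδ.le (sq_nonneg (s - tq))]
  have hx_le : L * tq / (2 * δ) ≤ r * tq / (2 * δ) := by gcongr
  have hfinal : r * tq / (2 * δ) + 2 ≤ s * r / (2 * δ) := by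
    have heq : r * tq / (2 * δ) + 2 = (r * tq + 4 * δ) / (2 * δ) := by
      field_simp
      ring
    rw [heq, div_le_div_iff₀ (by positivity) (by positivity)]
    nlinarith [mul_le_mul_of_nonneg_right hkey
      (le_of_lt (by positivity : (0:ℝ) < 2 * δ))]
  push_cast
  linarith

theorem exists_small_nice_net_codim_one
    (d : ℕ) (hd : 2 ≤ d)
    (a b : Fin d → ℝ) (hab : ∀ i, a i ≤ b i)
    (hdim : Set.ncard {i | a i < b i} = d - 1)
    (δ r : ℝ) (hδ : 0 < δ)
    (hr1 : ∀ i, b i - a i ≤ r)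
    (hr2 : 8 * Real.sqrt d * δ ≤ r) :
    ∃ S : Finset (EuclideanSpace ℝ (Fin d)),
      IsNiceNet δ a b S ∧
      (S.card : ℝ) ≤ (Real.sqrt d * r / (2 * δ)) ^ (d - 1) := by
  classical
  have hd1 : (1 : ℝ) ≤ (d : ℝ) - 1 := by
    have : (2 : ℝ) ≤ (d : ℝ) := by exact_mod_cast hd
    linarith
  set M := Real.sqrt d * r / (2 * δ) with hMdef
  set T : Fin d → Finset ℝ := fun i => gridT d δ (a i) (b i) with hTdef
  have hPcard : (Finset.univ.filter (fun i => a i < b i)).card = d - 1 := by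
    rw [Set.ncard_eq_toFinset_card'] at hdim
    simpa [Set.toFinset_setOf] using hdim
  refine ⟨((Fintype.piFinset T).image (WithLp.toLp 2) : Finset (EuclideanSpace ℝ (Fin d))), ⟨?_, ?_⟩, ?_⟩
  · intro z hz i
    exact gridT_mem_Icc d δ _ _ (hab i) (by obtain ⟨x, hx, rfl⟩ := Finset.mem_image.1 hz; exact (Fintype.mem_piFinset).1 hx i)
  · rintro F ⟨σ, rfl⟩ y hyF
    simp only [Set.mem_setOf_eq] at hyF
    have hy : ∀ i, a i ≤ y i ∧ y i ≤ b i := by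
      intro i
      have h := hyF i
      cases hσ : σ i with
      | none => rw [hσ] at h; exact h
      | some s =>
        rw [hσ] at h
        cases s
        · have h' : y i = a i := by simpa using h
          exact ⟨h'.ge, h'.le.trans (hab i)⟩
        · have h' : y i = b i := by simpa using h
          exact ⟨(hab i).trans h'.ge, h'.le⟩
    choose w hw1 hw2 using fun i =>
      gridT_near d hd δ hδ (a i) (b i) (hab i) (y i) (hy i).1 (hy i).2
    set z : EuclideanSpace ℝ (Fin d) :=
      WithLp.toLp 2 (fun i => (σ i).elim (w i) (fun s => if s then b i else a i)) with hzdef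
    have hz_eq : ∀ i, z i = (σ i).elim (w i) (fun s => if s then b i else a i) :=
      fun i => rfl
    have hz_fix : ∀ i s, σ i = some s → z i = (if s then b i else a i) := by
      intro i s hσ; rw [hz_eq i, hσ]; rfl
    have hz_free : ∀ i, σ i = none → z i = w i := by
      intro i hσ; rw [hz_eq i, hσ]; rfl
    refine ⟨z, ?_, ?_, ?_⟩
    · refine Finset.mem_image.2 ⟨fun i => z i, ?_, rfl⟩
      rw [Fintype.mem_piFinset]
      intro i
      cases hσ : σ i with
      | none => rw [hz_free i hσ]; exact hw1 i
      | some s =>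
        rw [hz_fix i s hσ]
        cases s
        · simpa using mem_gridT_left d δ (a i) (b i)
        · simpa using mem_gridT_right d δ (a i) (b i)
    · simp only [Set.mem_setOf_eq]
      intro i
      cases hσ : σ i with
      | none =>
        simp only [Option.elim]
        rw [hz_free i hσ]
        exact gridT_mem_Icc d δ _ _ (hab i) (hw1 i)
      | some s =>
        simp only [Option.elim]
        exact hz_fix i s hσ
    · have hzy : ∀ i, z i - y i = z i - y i := fun _ => rfl
      have hterm : ∀ i, (z i - y i) ^ 2 ≤ if a i < b i then δ ^ 2 / ((d : ℝ) - 1) else 0 := by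
        intro i
        cases hσ : σ i with
        | none => rw [hz_free i hσ]; exact hw2 i
        | some s =>
          have hyi := hyF i
          rw [hσ] at hyi
          simp only [Option.elim] at hyi
          rw [hz_fix i s hσ, ← hyi, sub_self, zero_pow two_ne_zero]
          split
          · positivity
          · exact le_rfl
      have hsum : ∑ i, (z i - y i) ^ 2 ≤ δ ^ 2 := by
        calc ∑ i, (z i - y i) ^ 2
            ≤ ∑ i, (if a i < b i then δ ^ 2 / ((d : ℝ) - 1) else 0) :=
              Finset.sum_le_sum (fun i _ => hterm i)
          _ = (Finset.univ.filter (fun i => a i < b i)).card • (δ ^ 2 / ((d : ℝ) - 1)) := by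
              rw [Finset.sum_ite, Finset.sum_const, Finset.sum_const, smul_zero, add_zero]
          _ = ((d : ℝ) - 1) * (δ ^ 2 / ((d : ℝ) - 1)) := by
              rw [hPcard, nsmul_eq_mul]
              congr 1
              push_cast [Nat.cast_sub (le_trans one_le_two hd)]
              ring
          _ = δ ^ 2 := by
              field_simp
      rw [EuclideanSpace.norm_eq]
      have hnorm : ∀ i, ‖(z - y) i‖ ^ 2 = (z i - y i) ^ 2 := by
        intro i
        rw [show (z - y) i = z i - y i from rfl, Real.norm_eq_abs, sq_abs]
      calc Real.sqrt (∑ i, ‖(z - y) i‖ ^ 2) = Real.sqrt (∑ i, (z i - y i) ^ 2) := by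
            congr 1; exact Finset.sum_congr rfl (fun i _ => hnorm i)
        _ ≤ Real.sqrt (δ ^ 2) := Real.sqrt_le_sqrt hsum
        _ = δ := Real.sqrt_sq hδ.le
  · refine le_trans (Nat.cast_le.2 Finset.card_image_le) ?_
    rw [Fintype.card_piFinset]
    push_cast
    calc ∏ i, ((T i).card : ℝ)
        ≤ ∏ i, (if a i < b i then M else 1) := by
          apply Finset.prod_le_prod (fun i _ => by positivity)
          intro i _
          by_cases h : a i < b i
          · rw [if_pos h]
            calc ((T i).card : ℝ) ≤ ((gridM d δ (b i - a i) + 1 : ℕ) : ℝ) := by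
                  exact_mod_cast card_gridT_le d δ (a i) (b i)
              _ ≤ M := gridM_card_bound d hd δ r (b i - a i) hδ
                  (by linarith [hab i]) (hr1 i) hr2
          · rw [if_neg h]
            have : T i = {a i} := gridT_degenerate d δ (a i) (b i)
              (le_antisymm (hab i) (not_lt.1 h))
            rw [hTdef] at this ⊢
            simp [this]
      _ = M ^ (d - 1) := by
          rw [Finset.prod_ite, Finset.prod_const, Finset.prod_const, one_pow, mul_one,
            hPcard]
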